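/- Let G=(V,E) be a redundant-free st-DAG with at least two vertices, with source s and target t. Then the set of all edges of E with start vertex s is a Fullsyncpoint, and the set of all edges of E with end vertex t is a Fullsyncpoint. -/

import Mathlib

open Set

variable {V : Type*}

/-- Predecessor set of a vertex. -/
def preds (E : Set (V × V)) (v : V) : Set V := {u | (u, v) ∈ E}

/-- Successor set of a vertex. -/
def succs (E : Set (V × V)) (u : V) : Set V := {w | (u, w) ∈ E}

/-- A digraph is acyclic: no vertex lies on a nonempty directed cycle. -/
def IsAcyclicDigraph (E : Set (V × V)) : Prop :=
  ∀ v : V, ¬ Relation.TransGen (fun a b => (a, b) ∈ E) v v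

/-- `s` is the unique vertex with no incoming edge. -/
def IsSourceOf (E : Set (V × V)) (s : V) : Prop :=
  preds E s = ∅ ∧ ∀ v, preds E v = ∅ → v = s

/-- `t` is the unique vertex with no outgoing edge. -/
def IsTargetOf (E : Set (V × V)) (t : V) : Prop :=
  succs E t = ∅ ∧ ∀ v, succs E v = ∅ → v = t

/-- A set of in-twins: all elements have the identical set of predecessors. -/
def InTwins (E : Set (V × V)) (S : Set V) : Prop :=
  ∀ v ∈ S, ∀ w ∈ S, preds E v = preds E w

/-- A set of out-twins: all elements have the identical set of successors. -/
def OutTwins (E : Set (V × V)) (P : Set V) : Prop :=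
  ∀ u ∈ P, ∀ w ∈ P, succs E u = succs E w

/-- `P_X`: the set of start vertices of the edges of `X`. -/
def startSet (X : Set (V × V)) : Set V := {u | ∃ v, (u, v) ∈ X}

/-- `S_X`: the set of end vertices of the edges of `X`. -/
def endSet (X : Set (V × V)) : Set V := {v | ∃ u, (u, v) ∈ X}

/-- Condition (a) of the syncpoint definition. -/
def CondA (E X : Set (V × V)) : Prop :=
  (∀ u ∈ startSet X, ∀ v ∈ endSet X, (u, v) ∈ E → (u, v) ∈ X) ∧
  ((endSet X).ncard = 1 ∨ InTwins E (endSet X)) ∧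
  (∀ v ∈ endSet X, preds E v = startSet X)

/-- Condition (b) of the syncpoint definition. -/
def CondB (E X : Set (V × V)) : Prop :=
  (∀ u ∈ startSet X, ∀ v ∈ endSet X, (u, v) ∈ E → (u, v) ∈ X) ∧
  ((startSet X).ncard = 1 ∨ OutTwins E (startSet X)) ∧
  (∀ u ∈ startSet X, succs E u = endSet X)

/-- Fullsyncpoint: a nonempty edge set satisfying both (a) and (b). -/
def IsFSP (E X : Set (V × V)) : Prop :=
  X.Nonempty ∧ X ⊆ E ∧ CondA E X ∧ CondB E X

/-- Forward-Halfsyncpoint: (a) holds and `|S_X| ≥ 2`. -/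
def IsFHSP (E X : Set (V × V)) : Prop :=
  X.Nonempty ∧ X ⊆ E ∧ CondA E X ∧ 2 ≤ (endSet X).ncard

/-- Backward-Halfsyncpoint: (b) holds and `|P_X| ≥ 2`. -/
def IsBHSP (E X : Set (V × V)) : Prop :=
  X.Nonempty ∧ X ⊆ E ∧ CondB E X ∧ 2 ≤ (startSet X).ncard

/-- A syncpoint is an FSP, FHSP or BHSP. -/
def IsSyncpoint (E X : Set (V × V)) : Prop :=
  IsFSP E X ∨ IsFHSP E X ∨ IsBHSP E X

/-- Maximum Syncpoint: a syncpoint that is not a proper subset of another syncpoint. -/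
def IsMSP (E X : Set (V × V)) : Prop :=
  IsSyncpoint E X ∧ ∀ Y, IsSyncpoint E Y → ¬ X ⊂ Y

/-- An edge-path: a nonempty list of edges, consecutive edges sharing endpoints. -/
def IsEdgePath (E : Set (V × V)) (p : List (V × V)) : Prop :=
  p ≠ [] ∧ (∀ e ∈ p, e ∈ E) ∧ p.Chain' (fun e f => e.2 = f.1)

/-- The vertex-path of an edge-path. -/
def vertexPath (p : List (V × V)) : List V :=
  match p with
  | [] => []
  | e :: rest => e.1 :: (e :: rest).map Prod.snd

/-- An st-path: an edge-path starting at `s` and ending at `t`. -/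
def IsStPath (E : Set (V × V)) (s t : V) (p : List (V × V)) : Prop :=
  IsEdgePath E p ∧ (∃ e, p.head? = some e ∧ e.1 = s) ∧
    (∃ e, p.getLast? = some e ∧ e.2 = t)

/-- An edge `(u,v) ∈ E` is redundant if there is a directed path from `u` to `v`
not containing the edge `(u,v)`. -/
def IsRedundant (E : Set (V × V)) (e : V × V) : Prop :=
  e ∈ E ∧ ∃ p, IsEdgePath E p ∧ e ∉ p ∧
    (∃ f, p.head? = some f ∧ f.1 = e.1) ∧ (∃ f, p.getLast? = some f ∧ f.2 = e.2)

/-- A graph is redundant-free if it has no redundant edge. -/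
def RedundantFree (E : Set (V × V)) : Prop := ∀ e, ¬ IsRedundant E e

/-- Entry vertices of the subgraph induced by `V'` (in an st-DAG with source `s`). -/
def entrySet (E : Set (V × V)) (s : V) (V' : Set V) : Set V :=
  {v | v ∈ V' ∧ ((∃ u, u ∉ V' ∧ (u, v) ∈ E) ∨ v = s)}

/-- Exit vertices of the subgraph induced by `V'` (in an st-DAG with target `t`). -/
def exitSet (E : Set (V × V)) (t : V) (V' : Set V) : Set V :=
  {v | v ∈ V' ∧ ((∃ w, w ∉ V' ∧ (v, w) ∈ E) ∨ v = t)}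

/-- The induced subgraph of `V'` is a cluster. -/
def IsCluster (E : Set (V × V)) (s t : V) (V' : Set V) : Prop :=
  2 ≤ (entrySet E s V').ncard ∧ 2 ≤ (exitSet E t V').ncard ∧
  entrySet E s V' ∩ exitSet E t V' = ∅ ∧
  InTwins E (entrySet E s V') ∧ OutTwins E (exitSet E t V')



section FSPHelpers

private lemma exists_good_path (E : Set (V × V)) {a b : V}
    (h : Relation.TransGen (fun x y => (x, y) ∈ E) a b) :
    ∃ p : List (V × V), p ≠ [] ∧ (∀ e ∈ p, e ∈ E) ∧ p.Chain' (fun e f => e.2 = f.1) ∧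
      (∃ e, p.head? = some e ∧ e.1 = a) ∧ (∃ e, p.getLast? = some e ∧ e.2 = b) ∧
      ∀ e ∈ p, Relation.ReflTransGen (fun x y => (x, y) ∈ E) a e.1 ∧
        Relation.ReflTransGen (fun x y => (x, y) ∈ E) e.2 b := by
  induction h using Relation.TransGen.head_induction_on with
  | single h =>
    rename_i a'
    refine ⟨[(a', b)], by simp, by simpa using h, by simp [List.Chain'], ⟨(a', b), by simp⟩,
      ⟨(a', b), by simp⟩, ?_⟩
    intro e he
    simp at he
    subst he
    exact ⟨Relation.ReflTransGen.refl, Relation.ReflTransGen.refl⟩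
  | head h1 h2 ih =>
    rename_i a' c
    obtain ⟨p, hne, hmem, hchain, ⟨e0, he0, he01⟩, ⟨eL, heL, heL2⟩, hinv⟩ := ih
    refine ⟨(a', c) :: p, by simp, ?_, ?_, ⟨(a', c), by simp⟩, ⟨eL, ?_, heL2⟩, ?_⟩
    · intro e he
      rcases List.mem_cons.mp he with h | h
      · subst h; exact h1
      · exact hmem e h
    · rw [List.Chain', List.isChain_cons]
      refine ⟨?_, hchain⟩
      intro y hy
      rw [he0] at hy
      simp at hy
      subst hy
      exact he01.symm
    · show ([(a', c)] ++ p).getLast? = some eL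
      rw [List.getLast?_append, heL]
      rfl
    · intro e he
      rcases List.mem_cons.mp he with h | h
      · subst h
        exact ⟨Relation.ReflTransGen.refl, h2.to_reflTransGen⟩
      · exact ⟨Relation.ReflTransGen.head h1 (hinv e h).1,
          (hinv e h).2⟩

private lemma no_second_pred {E : Set (V × V)} {s u v : V}
    (hacyc : IsAcyclicDigraph E) (hred : RedundantFree E)
    (hsv : (s, v) ∈ E) (huv : (u, v) ∈ E) (hus : u ≠ s)
    (hsu : Relation.TransGen (fun x y => (x, y) ∈ E) s u) : False := by
  obtain ⟨q, hne, hmem, hchain, ⟨e0, he0, he01⟩, ⟨eL, heL, heL2⟩, hinv⟩ :=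
    exists_good_path E hsu
  apply hred (s, v)
  refine ⟨hsv, q ++ [(u, v)], ⟨by simp, ?_, ?_⟩, ?_, ⟨e0, ?_, he01⟩, ⟨(u, v), ?_, rfl⟩⟩
  · intro e he
    rcases List.mem_append.mp he with h | h
    · exact hmem e h
    · simp at h; subst h; exact huv
  · rw [List.Chain', List.isChain_append]
    refine ⟨hchain, by simp, ?_⟩
    intro x hx y hy
    rw [heL] at hx
    simp at hx hy
    subst hx; subst hy
    exact heL2
  · intro hin
    rcases List.mem_append.mp hin with h | h
    · have := (hinv (s, v) h).2
      exact hacyc v (Relation.TransGen.tail' this huv)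
    · simp at h
      exact hus h.symm
  · rw [List.head?_append, he0]; rfl
  · exact List.getLast?_concat

private lemma no_second_succ {E : Set (V × V)} {t u w : V}
    (hacyc : IsAcyclicDigraph E) (hred : RedundantFree E)
    (hut : (u, t) ∈ E) (huw : (u, w) ∈ E) (hwt : w ≠ t)
    (hw : Relation.TransGen (fun x y => (x, y) ∈ E) w t) : False := by
  obtain ⟨q, hne, hmem, hchain, ⟨e0, he0, he01⟩, ⟨eL, heL, heL2⟩, hinv⟩ :=
    exists_good_path E hw
  apply hred (u, t)
  refine ⟨hut, (u, w) :: q, ⟨by simp, ?_, ?_⟩, ?_, ⟨(u, w), by simp, rfl⟩,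
    ⟨eL, ?_, heL2⟩⟩
  · intro e he
    rcases List.mem_cons.mp he with h | h
    · subst h; exact huw
    · exact hmem e h
  · rw [List.Chain', List.isChain_cons]
    refine ⟨?_, hchain⟩
    intro y hy
    rw [he0] at hy
    simp at hy
    subst hy
    exact he01.symm
  · intro hin
    rcases List.mem_cons.mp hin with h | h
    · exact hwt (congrArg Prod.snd h).symm
    · have := (hinv (u, t) h).1
      exact hacyc u (Relation.TransGen.head' huw this)
  · show ([(u, w)] ++ q).getLast? = some eL
    rw [List.getLast?_append, heL]
    rfl

private lemma reach_from_source [Finite V] {E : Set (V × V)} {s : V}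
    (hacyc : IsAcyclicDigraph E) (hs : IsSourceOf E s) (v : V) :
    Relation.ReflTransGen (fun x y => (x, y) ∈ E) s v := by
  have hirr : IsIrrefl V (Relation.TransGen (fun x y : V => (x, y) ∈ E)) := ⟨hacyc⟩
  have hwf : WellFounded (fun a b : V => (a, b) ∈ E) := by
    have h1 : WellFounded (Relation.TransGen (fun x y : V => (x, y) ∈ E)) :=
      Finite.wellFounded_of_trans_of_irrefl _
    exact Subrelation.wf (fun h => Relation.TransGen.single h) h1
  induction v using hwf.induction with
  | _ v ih =>
    by_cases hvs : v = s
    · subst hvs; exact Relation.ReflTransGen.refl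
    · have : preds E v ≠ ∅ := fun h => hvs (hs.2 v h)
      obtain ⟨u, hu⟩ := Set.nonempty_iff_ne_empty.mpr this
      exact (ih u hu).tail hu

private lemma reach_to_target [Finite V] {E : Set (V × V)} {t : V}
    (hacyc : IsAcyclicDigraph E) (ht : IsTargetOf E t) (v : V) :
    Relation.ReflTransGen (fun x y => (x, y) ∈ E) v t := by
  have hirr : IsIrrefl V (Relation.TransGen (fun x y : V => (y, x) ∈ E)) := by
    constructor
    intro v hv
    exact hacyc v ((Relation.transGen_swap).mp hv)
  have hwf : WellFounded (fun a b : V => (b, a) ∈ E) := by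
    have h1 : WellFounded (Relation.TransGen (fun x y : V => (y, x) ∈ E)) :=
      Finite.wellFounded_of_trans_of_irrefl _
    exact Subrelation.wf (fun h => Relation.TransGen.single h) h1
  induction v using hwf.induction with
  | _ v ih =>
    by_cases hvt : v = t
    · subst hvt; exact Relation.ReflTransGen.refl
    · have : succs E v ≠ ∅ := fun h => hvt (ht.2 v h)
      obtain ⟨w, hw⟩ := Set.nonempty_iff_ne_empty.mpr this
      exact Relation.ReflTransGen.head hw (ih w hw)

end FSPHelpers

/-- In a redundant-free st-DAG with at least two vertices, the edges
leaving the source form a FSP, and the edges entering the target form a FSP. -/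
theorem source_target_edges_are_fsp
    {V : Type*} [Fintype V] [Nonempty V] (E : Set (V × V)) (s t : V)
    (hacyc : IsAcyclicDigraph E) (hs : IsSourceOf E s) (ht : IsTargetOf E t)
    (hred : RedundantFree E) (hcard : 2 ≤ Fintype.card V) :
    IsFSP E {e | e ∈ E ∧ e.1 = s} ∧ IsFSP E {e | e ∈ E ∧ e.2 = t} := by
  have hne : Nonempty V := inferInstance
  -- a vertex different from s and from t
  obtain ⟨v₀, hv₀⟩ := Fintype.exists_ne_of_one_lt_card hcard s
  obtain ⟨w₀, hw₀⟩ := Fintype.exists_ne_of_one_lt_card hcard t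
  -- s has a successor
  have hsw : ∃ w, (s, w) ∈ E := by
    have h := reach_from_source hacyc hs v₀
    rcases h.cases_head with h | ⟨c, hc, _⟩
    · exact absurd h.symm hv₀
    · exact ⟨c, hc⟩
  -- t has a predecessor
  have hut : ∃ u, (u, t) ∈ E := by
    have h := reach_to_target hacyc ht w₀
    rcases Relation.reflTransGen_iff_eq_or_transGen.mp h with h | h
    · exact absurd h.symm hw₀
    · obtain ⟨c, _, hc⟩ := (Relation.TransGen.tail'_iff).mp h
      exact ⟨c, hc⟩
  obtain ⟨w₁, hw₁⟩ := hsw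
  obtain ⟨u₁, hu₁⟩ := hut
  -- predecessors of any successor of s are exactly {s}
  have hpred : ∀ v, (s, v) ∈ E → preds E v = {s} := by
    intro v hv
    ext u
    simp only [preds, Set.mem_setOf_eq, Set.mem_singleton_iff]
    constructor
    · intro hu
      by_contra hus
      have h := reach_from_source hacyc hs u
      rcases Relation.reflTransGen_iff_eq_or_transGen.mp h with h | h
      · exact hus h
      · exact no_second_pred hacyc hred hv hu hus h
    · rintro rfl; exact hv
  -- successors of any predecessor of t are exactly {t}
  have hsucc : ∀ u, (u, t) ∈ E → succs E u = {t} := by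
    intro u hu
    ext w
    simp only [succs, Set.mem_setOf_eq, Set.mem_singleton_iff]
    constructor
    · intro hw
      by_contra hwt
      have h := reach_to_target hacyc ht w
      rcases Relation.reflTransGen_iff_eq_or_transGen.mp h with h | h
      · exact hwt h.symm
      · exact no_second_succ hacyc hred hu hw hwt h
    · rintro rfl; exact hu
  constructor
  · -- edges leaving s
    set X : Set (V × V) := {e | e ∈ E ∧ e.1 = s} with hX
    have hstart : startSet X = {s} := by
      ext u
      simp only [startSet, hX, Set.mem_setOf_eq, Set.mem_singleton_iff]
      constructor
      · rintro ⟨v, _, rfl⟩; rfl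
      · rintro rfl; exact ⟨w₁, hw₁, rfl⟩
    have hend : endSet X = succs E s := by
      ext v
      simp only [endSet, succs, hX, Set.mem_setOf_eq]
      constructor
      · rintro ⟨u, hu, rfl⟩; exact hu
      · intro h; exact ⟨s, h, rfl⟩
    refine ⟨⟨(s, w₁), hw₁, rfl⟩, fun e he => he.1, ?_, ?_⟩
    · refine ⟨fun u hu v hv huv => ⟨huv, by rwa [hstart, Set.mem_singleton_iff] at hu⟩,
        Or.inr ?_, ?_⟩
      · intro v hv w hw
        rw [hend] at hv hw
        rw [hpred v hv, hpred w hw]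
      · intro v hv
        rw [hend] at hv
        rw [hpred v hv, hstart]
    · refine ⟨fun u hu v hv huv => ⟨huv, by rwa [hstart, Set.mem_singleton_iff] at hu⟩,
        Or.inl (by rw [hstart]; exact Set.ncard_singleton s), ?_⟩
      intro u hu
      rw [hstart, Set.mem_singleton_iff] at hu
      subst hu
      rw [hend]
  · -- edges entering t
    set X : Set (V × V) := {e | e ∈ E ∧ e.2 = t} with hX
    have hend : endSet X = {t} := by
      ext v
      simp only [endSet, hX, Set.mem_setOf_eq, Set.mem_singleton_iff]
      constructor
      · rintro ⟨u, _, rfl⟩; rfl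
      · rintro rfl; exact ⟨u₁, hu₁, rfl⟩
    have hstart : startSet X = preds E t := by
      ext u
      simp only [startSet, preds, hX, Set.mem_setOf_eq]
      constructor
      · rintro ⟨v, hv, rfl⟩; exact hv
      · intro h; exact ⟨t, h, rfl⟩
    refine ⟨⟨(u₁, t), hu₁, rfl⟩, fun e he => he.1, ?_, ?_⟩
    · refine ⟨fun u hu v hv huv => ⟨huv, by rwa [hend, Set.mem_singleton_iff] at hv⟩,
        Or.inl (by rw [hend]; exact Set.ncard_singleton t), ?_⟩
      intro v hv
      rw [hend, Set.mem_singleton_iff] at hv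
      subst hv
      rw [hstart]
    · refine ⟨fun u hu v hv huv => ⟨huv, by rwa [hend, Set.mem_singleton_iff] at hv⟩,
        Or.inr ?_, ?_⟩
      · intro u hu w hw
        rw [hstart] at hu hw
        rw [hsucc u hu, hsucc w hw]
      · intro u hu
        rw [hstart] at hu
        rw [hsucc u hu, hend]
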